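/- Fix K ≥ 1 and set v_k = 1/(K − k + 1), q_k = 1/2 and α_k = 1/K for k = 1,…,K. Define the triangular-instance CDFs F_k(p) = 1 for p ≥ v_k and F_k(p) = p·(1 − q_k)/(p·(1 − q_k) + v_k·q_k) for 0 ≤ p < v_k, so that the profit functions are π_k(p) = p·v_k/(p + v_k) for p < v_k and π_k(p) = 0 for p ≥ v_k. Then each F_k is a regular distribution, sup_{p ≥ 0} π_k(p) = v_k/2, the optimal discrimination profit is Π* = Σ_k α_k·(sup_{p≥0} π_k(p)) = (1/(2K))·Σ_{k=1}^K 1/k, and the optimal uniform-price profit is Π^U = sup_{p ≥ 0} Σ_k α_k·π_k(p) = (1/K)·Σ_{k=1}^K 1/(K + k). -/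

import Mathlib

lemma tri_reindex (K : ℕ) (u : ℕ → ℝ) :
    (∑ k : Fin K, u (K - k.val)) = ∑ j ∈ Finset.range K, u (j + 1) := by
  rw [Fin.sum_univ_eq_sum_range (fun k => u (K - k)) K,
    ← Finset.sum_range_reflect (fun k => u (K - k)) K]
  refine Finset.sum_congr rfl fun j hj => ?_
  rw [Finset.mem_range] at hj
  congr 1
  omega

lemma tri_key (K : ℕ) (p : ℝ) (hp : 0 ≤ p) :
    (∑ m ∈ Finset.range K, if ((m : ℝ) + 1) * p < 1 then p / (((m : ℝ) + 1) * p + 1) else 0)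
      ≤ ∑ m ∈ Finset.range K, 1 / ((K : ℝ) + (m : ℝ) + 1) := by
  induction K with
  | zero => simp
  | succ K ih =>
    by_cases hc : ((K : ℝ) + 1) * p < 1
    · apply Finset.sum_le_sum
      intro m hm
      rw [Finset.mem_range] at hm
      have hm' : (m : ℝ) ≤ (K : ℝ) := by exact_mod_cast Nat.lt_succ_iff.mp hm
      have hcond : ((m : ℝ) + 1) * p < 1 := by nlinarith
      rw [if_pos hcond]
      rw [div_le_div_iff₀ (by nlinarith) (by push_cast; nlinarith)]
      push_cast
      nlinarith
    · rw [Finset.sum_range_succ]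
      rw [if_neg (by push_cast; exact hc), add_zero]
      refine le_trans ih ?_
      have hK0 : (0:ℝ) ≤ (K : ℝ) := Nat.cast_nonneg K
      have htele := Finset.sum_range_sub' (fun m => 1 / ((K : ℝ) + (m : ℕ) + 1)) K
      rw [Finset.sum_sub_distrib] at htele
      simp only [Nat.cast_add, Nat.cast_one, Nat.cast_zero] at htele
      rw [Finset.sum_range_succ]
      have hcongr : ∑ m ∈ Finset.range K, 1 / (((K + 1 : ℕ) : ℝ) + (m : ℝ) + 1)
          = ∑ m ∈ Finset.range K, 1 / ((K : ℝ) + ((m : ℝ) + 1) + 1) := by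
        refine Finset.sum_congr rfl fun m _ => ?_
        push_cast; ring_nf
      have hineq : 1 / ((K:ℝ) + 0 + 1) - 1 / ((K:ℝ) + (K:ℝ) + 1)
          ≤ 1 / (((K + 1 : ℕ) : ℝ) + (K : ℝ) + 1) := by
        push_cast
        have h1 : (0:ℝ) < (K:ℝ) + 1 := by linarith
        have h2 : (0:ℝ) < (K:ℝ) + (K:ℝ) + 1 := by linarith
        have h3 : (0:ℝ) < (K:ℝ) + 1 + (K:ℝ) + 1 := by linarith
        rw [add_zero, div_sub_div _ _ h1.ne' h2.ne', div_le_div_iff₀ (by positivity) h3]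
        ring_nf
        nlinarith
      rw [hcongr]
      linarith

/-- **Triangular instances (regular distributions) with poor uniform pricing.**
For `K ≥ 1` segments with values `v k = 1/(K - k)` (one-based: `1/(K - k + 1)`),
quantiles `q_k = 1/2`, weights `α k = 1/K` and triangular-instance CDFs
`F k p = 1` for `p ≥ v k` and `F k p = p(1 - q)/(p(1 - q) + v k · q)` (with
`q = 1/2`) for `0 ≤ p < v k`: each `F k` is nondecreasing with a nondecreasing
virtual value (regular), the profit functions are `p · v k/(p + v k)` below
`v k` and `0` above, the per-segment optimal profit is `v k / 2`, the optimal
discrimination profit is `(1/(2K)) Σ_{k=1}^K 1/k`, and the optimal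
uniform-price profit is `(1/K) Σ_{k=1}^K 1/(K + k)`. -/
theorem triangular_instances_failure_of_regular
    (K : ℕ) (hK : 1 ≤ K)
    (v : Fin K → ℝ) (hv : ∀ k : Fin K, v k = 1 / ((K : ℝ) - (k.val : ℝ)))
    (F : Fin K → ℝ → ℝ)
    (hFhigh : ∀ k, ∀ p : ℝ, v k ≤ p → F k p = 1)
    (hFlow : ∀ k, ∀ p : ℝ, 0 ≤ p → p < v k →
        F k p = (p * (1 - 1/2)) / (p * (1 - 1/2) + v k * (1/2))) :
    (∀ k, MonotoneOn (F k) (Set.Ici 0)) ∧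
    (∀ k, MonotoneOn (fun p => p - (1 - F k p) / deriv (F k) p)
        (Set.Ioo 0 (v k))) ∧
    (∀ k, ∀ p : ℝ, 0 ≤ p → p < v k → p * (1 - F k p) = p * v k / (p + v k)) ∧
    (∀ k, ∀ p : ℝ, v k ≤ p → p * (1 - F k p) = 0) ∧
    (∀ k, sSup ((fun p => p * (1 - F k p)) '' Set.Ici 0) = v k / 2) ∧
    (∑ k, (1 / (K : ℝ)) * sSup ((fun p => p * (1 - F k p)) '' Set.Ici 0)
        = (1 / (2 * (K : ℝ))) * ∑ j ∈ Finset.range K, 1 / ((j : ℝ) + 1)) ∧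
    sSup ((fun p => ∑ k, (1 / (K : ℝ)) * (p * (1 - F k p))) '' Set.Ici 0)
        = (1 / (K : ℝ)) * ∑ j ∈ Finset.range K, 1 / ((K : ℝ) + ((j : ℝ) + 1)) := by
  have hKpos : (0:ℝ) < (K:ℝ) := by exact_mod_cast hK
  have hden : ∀ k : Fin K, (0:ℝ) < (K:ℝ) - (k.val : ℝ) := by
    intro k
    have := k.isLt
    have : (k.val : ℝ) < (K : ℝ) := by exact_mod_cast this
    linarith
  have hvpos : ∀ k : Fin K, 0 < v k := by
    intro k; rw [hv k]; exact one_div_pos.mpr (hden k)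
  have hvK : ∀ k : Fin K, 1 / (K:ℝ) ≤ v k := by
    intro k; rw [hv k]
    apply one_div_le_one_div_of_le (hden k)
    have : (0:ℝ) ≤ (k.val : ℝ) := Nat.cast_nonneg _
    linarith
  have hcast : ∀ k : Fin K, ((K - k.val : ℕ) : ℝ) = (K:ℝ) - (k.val : ℝ) := by
    intro k; exact_mod_cast Nat.cast_sub k.isLt.le
  -- claim 3: profit below v k
  have claim3 : ∀ k, ∀ p : ℝ, 0 ≤ p → p < v k → p * (1 - F k p) = p * v k / (p + v k) := by
    intro k p hp hpv
    have h1 : (0:ℝ) < p + v k := by linarith [hvpos k]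
    have h2 : p * (1 - 1/2) + v k * (1/2) ≠ 0 := by
      have := hvpos k; nlinarith
    have h3 : (p * (1 - 1/2)) / (p * (1 - 1/2) + v k * (1/2)) = p / (p + v k) := by
      rw [div_eq_div_iff h2 h1.ne']; ring
    have h4 : 1 - p / (p + v k) = v k / (p + v k) := by
      field_simp
      ring
    rw [hFlow k p hp hpv, h3, h4, mul_div_assoc]
  -- claim 4
  have claim4 : ∀ k, ∀ p : ℝ, v k ≤ p → p * (1 - F k p) = 0 := by
    intro k p hpv
    rw [hFhigh k p hpv]; ring
  -- claim 1: monotone CDF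
  have claim1 : ∀ k, MonotoneOn (F k) (Set.Ici 0) := by
    intro k x hx y hy hxy
    rw [Set.mem_Ici] at hx hy
    have hvk := hvpos k
    rcases lt_or_ge x (v k) with hxv | hxv
    · rcases lt_or_ge y (v k) with hyv | hyv
      · rw [hFlow k x hx hxv, hFlow k y hy hyv]
        rw [div_le_div_iff₀ (by nlinarith) (by nlinarith)]
        nlinarith
      · rw [hFlow k x hx hxv, hFhigh k y hyv]
        rw [div_le_one (by nlinarith)]
        nlinarith
    · rw [hFhigh k x hxv, hFhigh k y (le_trans hxv hxy)]
  -- claim 2: virtual value constant hence monotone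
  have claim2 : ∀ k, MonotoneOn (fun p => p - (1 - F k p) / deriv (F k) p)
      (Set.Ioo 0 (v k)) := by
    intro k
    have hvk := hvpos k
    have hFeq : ∀ p ∈ Set.Ioo 0 (v k), F k p = p / (p + v k) := by
      intro p hp
      rw [hFlow k p hp.1.le hp.2]
      have h1 : (0:ℝ) < p + v k := by linarith [hp.1]
      rw [div_eq_div_iff (by nlinarith) h1.ne']
      ring
    have hval : ∀ x ∈ Set.Ioo 0 (v k),
        x - (1 - F k x) / deriv (F k) x = -(v k) := by
      intro x hx
      have hx0 := hx.1
      have hne : x + v k ≠ 0 := by positivity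
      have hd : deriv (F k) x = v k / (x + v k) ^ 2 := by
        have hev : F k =ᶠ[nhds x] fun p => p / (p + v k) :=
          Filter.eventuallyEq_of_mem (isOpen_Ioo.mem_nhds hx) hFeq
        rw [hev.deriv_eq]
        have hderiv : HasDerivAt (fun p => p / (p + v k))
            ((1 * (x + v k) - x * 1) / (x + v k) ^ 2) x :=
          (hasDerivAt_id x).div ((hasDerivAt_id x).add_const (v k)) hne
        rw [hderiv.deriv]
        ring
      rw [hd, hFeq x hx]
      field_simp
      ring
    intro a ha b hb hab
    simp only
    rw [hval a ha, hval b hb]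
  -- claim 5: per-segment sup
  have claim5 : ∀ k, sSup ((fun p => p * (1 - F k p)) '' Set.Ici 0) = v k / 2 := by
    intro k
    have hvk := hvpos k
    have hne : ((fun p => p * (1 - F k p)) '' Set.Ici 0).Nonempty :=
      ⟨_, Set.mem_image_of_mem _ (Set.self_mem_Ici (a := (0:ℝ)))⟩
    have hub : (v k / 2) ∈ upperBounds ((fun p => p * (1 - F k p)) '' Set.Ici 0) := by
      rintro y ⟨p, hp, rfl⟩
      rw [Set.mem_Ici] at hp
      show p * (1 - F k p) ≤ v k / 2
      rcases lt_or_ge p (v k) with h | h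
      · rw [claim3 k p hp h]
        rw [div_le_div_iff₀ (by nlinarith) (by norm_num)]
        nlinarith
      · rw [claim4 k p h]; linarith
    refine IsLUB.csSup_eq ⟨hub, ?_⟩ hne
    intro b hb
    by_contra hlt
    push_neg at hlt
    have hb0 : 0 ≤ b := by
      have h0 := hb (Set.mem_image_of_mem _ (Set.self_mem_Ici (a := (0:ℝ))))
      simpa using h0
    have hvb : 0 < v k - b := by linarith
    set p : ℝ := (b * v k / (v k - b) + v k) / 2 with hpdef
    have hq0 : 0 ≤ b * v k / (v k - b) := by positivity
    have hqlt : b * v k / (v k - b) < v k := by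
      rw [div_lt_iff₀ hvb]; nlinarith
    have hplt : p < v k := by rw [hpdef]; linarith
    have hpnn : 0 ≤ p := by rw [hpdef]; linarith
    have hmem : p * (1 - F k p) ≤ b := hb (Set.mem_image_of_mem _ (Set.mem_Ici.mpr hpnn))
    rw [claim3 k p hpnn hplt] at hmem
    have hgt : b < p * v k / (p + v k) := by
      rw [lt_div_iff₀ (by linarith)]
      have hq : b * v k / (v k - b) < p := by rw [hpdef]; linarith
      rw [div_lt_iff₀ hvb] at hq
      nlinarith
    linarith
  -- claim 6
  have claim6 : ∑ k, (1 / (K : ℝ)) * sSup ((fun p => p * (1 - F k p)) '' Set.Ici 0)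
      = (1 / (2 * (K : ℝ))) * ∑ j ∈ Finset.range K, 1 / ((j : ℝ) + 1) := by
    have h1 : ∀ k : Fin K, (1 / (K : ℝ)) * sSup ((fun p => p * (1 - F k p)) '' Set.Ici 0)
        = (fun m : ℕ => (1 / (2 * (K:ℝ))) * (1 / (m : ℝ))) (K - k.val) := by
      intro k
      rw [claim5 k, hv k]
      simp only
      rw [hcast k]
      field_simp
    rw [Finset.sum_congr rfl fun k _ => h1 k,
      tri_reindex K (fun m : ℕ => (1 / (2 * (K:ℝ))) * (1 / (m : ℝ))),
      Finset.mul_sum]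
    refine Finset.sum_congr rfl fun j _ => ?_
    push_cast
    ring
  -- claim 7
  have claim7 : sSup ((fun p => ∑ k, (1 / (K : ℝ)) * (p * (1 - F k p))) '' Set.Ici 0)
      = (1 / (K : ℝ)) * ∑ j ∈ Finset.range K, 1 / ((K : ℝ) + ((j : ℝ) + 1)) := by
    set S := (1 / (K : ℝ)) * ∑ j ∈ Finset.range K, 1 / ((K : ℝ) + ((j : ℝ) + 1)) with hS
    have hne : ((fun p => ∑ k, (1 / (K : ℝ)) * (p * (1 - F k p))) '' Set.Ici 0).Nonempty :=
      ⟨_, Set.mem_image_of_mem _ (Set.self_mem_Ici (a := (0:ℝ)))⟩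
    -- pointwise formula in terms of m = K - k
    have hw : ∀ (k : Fin K) (p : ℝ), 0 ≤ p →
        p * (1 - F k p) = (fun m : ℕ => if (m : ℝ) * p < 1 then p / ((m : ℝ) * p + 1) else 0)
          (K - k.val) := by
      intro k p hp
      simp only
      rw [hcast k]
      have hm : (0:ℝ) < (K:ℝ) - (k.val : ℝ) := hden k
      by_cases hc : ((K:ℝ) - (k.val : ℝ)) * p < 1
      · rw [if_pos hc]
        have hpv : p < v k := by
          rw [hv k, lt_div_iff₀ hm]; linarith [mul_comm p ((K:ℝ) - (k.val:ℝ))]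
        rw [claim3 k p hp hpv, hv k]
        have h1 : p + 1 / ((K:ℝ) - (k.val:ℝ)) ≠ 0 := by positivity
        have h2 : ((K:ℝ) - (k.val:ℝ)) * p + 1 ≠ 0 := by nlinarith
        rw [div_eq_div_iff h1 h2]
        have h3 : ((K:ℝ) - (k.val:ℝ)) * (1 / ((K:ℝ) - (k.val:ℝ))) = 1 :=
          mul_one_div_cancel hm.ne'
        linear_combination (p * p) * h3
      · push_neg at hc
        rw [if_neg (by push_neg; exact hc)]
        have hpv : v k ≤ p := by
          rw [hv k, div_le_iff₀ hm]; nlinarith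
        exact claim4 k p hpv
    -- upper bound
    have hub : S ∈ upperBounds ((fun p => ∑ k, (1 / (K : ℝ)) * (p * (1 - F k p))) '' Set.Ici 0) := by
      rintro y ⟨p, hp, rfl⟩
      rw [Set.mem_Ici] at hp
      show (∑ k, (1 / (K : ℝ)) * (p * (1 - F k p))) ≤ S
      rw [← Finset.mul_sum, hS]
      apply mul_le_mul_of_nonneg_left _ (by positivity)
      rw [Finset.sum_congr rfl fun k _ => hw k p hp,
        tri_reindex K (fun m : ℕ => if (m : ℝ) * p < 1 then p / ((m : ℝ) * p + 1) else 0)]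
      have := tri_key K p hp
      refine le_trans (le_of_eq ?_) (le_trans this (le_of_eq ?_))
      · refine Finset.sum_congr rfl fun j _ => ?_
        push_cast
        rw [mul_comm ((j:ℝ)+1) p]
      · refine Finset.sum_congr rfl fun j _ => ?_
        ring_nf
    -- least upper bound via limit p → (1/K)⁻
    refine IsLUB.csSup_eq ⟨hub, ?_⟩ hne
    intro b hb
    have hc0 : (0:ℝ) < 1 / (K:ℝ) := by positivity
    have hlim : Filter.Tendsto (fun p => ∑ k, (1 / (K : ℝ)) * (p * (1 - F k p)))
        (nhdsWithin (1/(K:ℝ)) (Set.Iio (1/(K:ℝ)))) (nhds S) := by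
      have hev : (fun p => ∑ k : Fin K, (1 / (K : ℝ)) * (p * (1 - F k p)))
          =ᶠ[nhdsWithin (1/(K:ℝ)) (Set.Iio (1/(K:ℝ)))]
          (fun p => ∑ k : Fin K, (1 / (K : ℝ)) * (p * v k / (p + v k))) := by
        apply Filter.eventuallyEq_of_mem
          (Ioo_mem_nhdsLT_of_mem (Set.mem_Ioc.mpr ⟨hc0, le_refl _⟩))
        intro p hp
        refine Finset.sum_congr rfl fun k _ => ?_
        rw [claim3 k p hp.1.le (lt_of_lt_of_le hp.2 (hvK k))]
      rw [Filter.tendsto_congr' hev]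
      have hgc : ∀ k : Fin K, (1/(K:ℝ)) * ((1/(K:ℝ)) * v k / (1/(K:ℝ) + v k))
          = (fun m : ℕ => (1/(K:ℝ)) * (1/((K:ℝ) + (m:ℝ)))) (K - k.val) := by
        intro k
        have hm := hden k
        simp only [hv k, hcast k]
        congr 1
        rw [div_eq_div_iff (by positivity) (by positivity)]
        field_simp
        ring
      have hcont : Filter.Tendsto (fun p => ∑ k : Fin K, (1/(K:ℝ)) * (p * v k / (p + v k)))
          (nhdsWithin (1/(K:ℝ)) (Set.Iio (1/(K:ℝ))))
          (nhds (∑ k : Fin K, (1/(K:ℝ)) * ((1/(K:ℝ)) * v k / (1/(K:ℝ) + v k)))) := by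
        apply tendsto_finset_sum
        intro k _
        have hne2 : (1/(K:ℝ)) + v k ≠ 0 := by
          have := hvpos k; positivity
        have hca : ContinuousAt (fun p : ℝ => (1/(K:ℝ)) * (p * v k / (p + v k)))
            (1/(K:ℝ)) :=
          continuousAt_const.mul (((continuousAt_id.mul continuousAt_const).div
            (continuousAt_id.add continuousAt_const) hne2))
        exact hca.mono_left nhdsWithin_le_nhds
      have hSeq : (∑ k : Fin K, (1/(K:ℝ)) * ((1/(K:ℝ)) * v k / (1/(K:ℝ) + v k))) = S := by
        rw [Finset.sum_congr rfl fun k _ => hgc k,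
          tri_reindex K (fun m : ℕ => (1/(K:ℝ)) * (1/((K:ℝ) + (m:ℝ)))), hS, Finset.mul_sum]
        refine Finset.sum_congr rfl fun j _ => ?_
        push_cast
        ring
      rwa [hSeq] at hcont
    have hevle : ∀ᶠ p in nhdsWithin (1/(K:ℝ)) (Set.Iio (1/(K:ℝ))),
        (fun p => ∑ k, (1 / (K : ℝ)) * (p * (1 - F k p))) p ≤ b := by
      apply Filter.eventually_of_mem
        (Ioo_mem_nhdsLT_of_mem (Set.mem_Ioc.mpr ⟨hc0, le_refl _⟩))
      intro p hp
      exact hb (Set.mem_image_of_mem _ (Set.mem_Ici.mpr hp.1.le))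
    exact le_of_tendsto hlim hevle
  exact ⟨claim1, claim2, claim3, claim4, claim5, claim6, claim7⟩
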